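/- Let 𝔟 be the upper triangular n×n real matrices and define 𝔥 = 𝔞_◇ ⊕ 𝔰 ⊕ 𝔳⁺, where 𝔞_◇ = span{e_{r,r} + e_{n-r+1,n-r+1} : 1 ≤ r ≤ ⌊n/2⌋} (plus e_{(n+1)/2,(n+1)/2} if n is odd), 𝔰 = span{e_{r,n-r+1} : 1 ≤ r ≤ ⌊n/2⌋}, and 𝔳⁺ = span{e_{i,j} : i < j < n-i+1}. Then 𝔥 is a Lie subalgebra of 𝔟 with [𝔥,𝔥] ⊆ 𝔳⁺, and dim 𝔥 = ⌈n/2⌉ + ⌊n/2⌋ + dim 𝔳⁺. -/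

import Mathlib

open Matrix

/-- Elementary matrix `e_{i,j}` (0-based indices). -/
def elemMat (n : ℕ) (i j : Fin n) : Matrix (Fin n) (Fin n) ℝ :=
  Matrix.single i j 1

/-- Spanning set of `𝔞_◇`: the matrices `e_{r,r} + e_{n-r+1,n-r+1}` (1-based), i.e.
`e_{r,r} + e_{n-1-r,n-1-r}` for `2r ≤ n-1` in 0-based indices (when `n` is odd and
`r` is the middle index this gives `2 e_{r,r}`). -/
def aSet (n : ℕ) : Set (Matrix (Fin n) (Fin n) ℝ) :=
  {X | ∃ r : Fin n, 2 * (r : ℕ) ≤ n - 1 ∧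
    ∃ h : n - 1 - (r : ℕ) < n,
      X = elemMat n r r + elemMat n ⟨n - 1 - (r : ℕ), h⟩ ⟨n - 1 - (r : ℕ), h⟩}

/-- Spanning set of `𝔰`: the matrices `e_{r,n-r+1}` for `1 ≤ r ≤ ⌊n/2⌋` (1-based), i.e.
`e_{r, n-1-r}` for `2r + 2 ≤ n` in 0-based indices. -/
def sSet (n : ℕ) : Set (Matrix (Fin n) (Fin n) ℝ) :=
  {X | ∃ r : Fin n, 2 * (r : ℕ) + 2 ≤ n ∧
    ∃ h : n - 1 - (r : ℕ) < n, X = elemMat n r ⟨n - 1 - (r : ℕ), h⟩}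

/-- Spanning set of `𝔳⁺`: the matrices `e_{i,j}` for `i < j < n-i+1` (1-based), i.e.
`i < j < n-1-i` in 0-based indices. -/
def vSet (n : ℕ) : Set (Matrix (Fin n) (Fin n) ℝ) :=
  {X | ∃ i j : Fin n, (i : ℕ) < (j : ℕ) ∧ (j : ℕ) < n - 1 - (i : ℕ) ∧ X = elemMat n i j}

/-- The polarization subalgebra `𝔥 = 𝔞_◇ ⊕ 𝔰 ⊕ 𝔳⁺`. -/
def hAlg (n : ℕ) : Submodule ℝ (Matrix (Fin n) (Fin n) ℝ) :=
  Submodule.span ℝ (aSet n ∪ sSet n ∪ vSet n)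

/-! ### Auxiliary lemmas -/

@[simp] lemma val_mk' {n a : ℕ} (h : a < n) : ((⟨a, h⟩ : Fin n) : ℕ) = a := rfl

lemma elemMat_apply (n : ℕ) (i j a b : Fin n) :
    elemMat n i j a b = if (i:ℕ) = a ∧ (j:ℕ) = b then 1 else 0 := by
  simp [elemMat, Matrix.single, Fin.ext_iff]

lemma elemMat_mul (n : ℕ) (i j k l : Fin n) :
    elemMat n i j * elemMat n k l = if (j:ℕ) = (k:ℕ) then elemMat n i l else 0 := by
  rcases eq_or_ne (j:ℕ) (k:ℕ) with h | h
  · have : j = k := Fin.ext h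
    subst this
    rw [if_pos rfl]
    simpa [elemMat] using Matrix.single_mul_single_same (c := (1:ℝ)) i j l 1
  · rw [if_neg h]
    exact Matrix.single_mul_single_of_ne (c := (1:ℝ)) i j k (fun hjk => h (by rw [hjk])) 1

/-- Pattern submodules: matrices vanishing on a prescribed set of positions. -/
def patt (n : ℕ) (P : Fin n → Fin n → Prop) : Submodule ℝ (Matrix (Fin n) (Fin n) ℝ) where
  carrier := {X | ∀ i j, P i j → X i j = 0}
  add_mem' := by
    intro a b ha hb i j h
    simp [Matrix.add_apply, ha i j h, hb i j h]
  zero_mem' := by intro i j h; simp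
  smul_mem' := by
    intro c a ha i j h
    simp [Matrix.smul_apply, ha i j h]

lemma elemMat_mem_patt {n : ℕ} {P : Fin n → Fin n → Prop} {i j : Fin n}
    (h : ¬ P i j) : elemMat n i j ∈ patt n P := by
  intro a b hab
  rw [elemMat_apply, if_neg]
  rintro ⟨h1, h2⟩
  exact h (by rwa [show i = a from Fin.ext h1, show j = b from Fin.ext h2])

lemma patt_inf_eq_bot {n : ℕ} {P Q : Fin n → Fin n → Prop}
    (h : ∀ i j, P i j ∨ Q i j) : patt n P ⊓ patt n Q = ⊥ := by
  rw [eq_bot_iff]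
  rintro X ⟨hP, hQ⟩
  ext i j
  rcases h i j with h' | h'
  · exact hP i j h'
  · exact hQ i j h'

lemma elem_mem_v {n : ℕ} (i j : Fin n) (h1 : (i:ℕ) < (j:ℕ)) (h2 : (j:ℕ) < n - 1 - (i:ℕ)) :
    elemMat n i j ∈ Submodule.span ℝ (vSet n) :=
  Submodule.subset_span ⟨i, j, h1, h2, rfl⟩

lemma ite_elem_mem {n : ℕ} (c : Prop) [Decidable c] (i j : Fin n)
    (h : c → (i:ℕ) < (j:ℕ) ∧ (j:ℕ) < n - 1 - (i:ℕ)) :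
    (if c then elemMat n i j else 0) ∈ Submodule.span ℝ (vSet n) := by
  split_ifs with hc
  · exact elem_mem_v i j (h hc).1 (h hc).2
  · exact Submodule.zero_mem _

/-! ### Triangularity -/

lemma span_union_triangular (n : ℕ) :
    Submodule.span ℝ (aSet n ∪ sSet n ∪ vSet n) ≤ patt n (fun i j => (j:ℕ) < (i:ℕ)) := by
  rw [Submodule.span_le]
  rintro X ((⟨r, hr, h, rfl⟩ | ⟨r, hr, h, rfl⟩) | ⟨i, j, hij, hj, rfl⟩)
  · exact (patt n _).add_mem (elemMat_mem_patt (by simp)) (elemMat_mem_patt (by simp))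
  · exact elemMat_mem_patt (by have := r.isLt; simp; omega)
  · exact elemMat_mem_patt (by omega)

/-! ### Pattern bounds for the three spans -/

lemma spanA_le_ne (n : ℕ) :
    Submodule.span ℝ (aSet n) ≤ patt n (fun i j => (i:ℕ) ≠ (j:ℕ)) := by
  rw [Submodule.span_le]
  rintro X ⟨r, hr, h, rfl⟩
  exact (patt n _).add_mem (elemMat_mem_patt (by simp)) (elemMat_mem_patt (by simp))

lemma spanS_le_eq (n : ℕ) :
    Submodule.span ℝ (sSet n) ≤ patt n (fun i j => (i:ℕ) = (j:ℕ)) := by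
  rw [Submodule.span_le]
  rintro X ⟨r, hr, h, rfl⟩
  exact elemMat_mem_patt (by have := r.isLt; simp; omega)

/-- The predicate marking the diagonal and the (upper) antidiagonal. -/
def diagAnti (n : ℕ) (i j : Fin n) : Prop :=
  (i:ℕ) = (j:ℕ) ∨ ((i:ℕ) < (j:ℕ) ∧ (i:ℕ) + (j:ℕ) = n - 1)

lemma spanA_le_notDA (n : ℕ) :
    Submodule.span ℝ (aSet n) ≤ patt n (fun i j => ¬ diagAnti n i j) := by
  rw [Submodule.span_le]
  rintro X ⟨r, hr, h, rfl⟩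
  exact (patt n _).add_mem (elemMat_mem_patt (by simp [diagAnti]))
    (elemMat_mem_patt (by simp [diagAnti]))

lemma spanS_le_notDA (n : ℕ) :
    Submodule.span ℝ (sSet n) ≤ patt n (fun i j => ¬ diagAnti n i j) := by
  rw [Submodule.span_le]
  rintro X ⟨r, hr, h, rfl⟩
  refine elemMat_mem_patt ?_
  have := r.isLt
  simp only [not_not, diagAnti, val_mk']
  right
  omega

lemma spanV_le_DA (n : ℕ) :
    Submodule.span ℝ (vSet n) ≤ patt n (fun i j => diagAnti n i j) := by
  rw [Submodule.span_le]
  rintro X ⟨i, j, hij, hj, rfl⟩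
  refine elemMat_mem_patt ?_
  have hin := i.isLt
  simp only [diagAnti, not_or, not_and]
  exact ⟨by omega, by omega⟩

/-! ### Commutators of generators -/

lemma comm_aa (n : ℕ) {X Y : Matrix (Fin n) (Fin n) ℝ} (hX : X ∈ aSet n) (hY : Y ∈ aSet n) :
    X * Y - Y * X = 0 := by
  obtain ⟨r, hr, hrlt, rfl⟩ := hX
  obtain ⟨q, hq, hqlt, rfl⟩ := hY
  have key : ∀ a b : Fin n, elemMat n a a * elemMat n b b = elemMat n b b * elemMat n a a := by
    intro a b
    rw [elemMat_mul, elemMat_mul]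
    rcases eq_or_ne (a:ℕ) (b:ℕ) with h | h
    · rw [if_pos h, if_pos h.symm, show a = b from Fin.ext h]
    · rw [if_neg h, if_neg (Ne.symm h)]
  simp only [add_mul, mul_add]
  rw [key r q, key r ⟨n - 1 - (q:ℕ), hqlt⟩, key ⟨n - 1 - (r:ℕ), hrlt⟩ q,
    key ⟨n - 1 - (r:ℕ), hrlt⟩ ⟨n - 1 - (q:ℕ), hqlt⟩]
  abel

lemma comm_as (n : ℕ) {X Y : Matrix (Fin n) (Fin n) ℝ} (hX : X ∈ aSet n) (hY : Y ∈ sSet n) :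
    X * Y - Y * X = 0 := by
  obtain ⟨r, hr, hrlt, rfl⟩ := hX
  obtain ⟨q, hq, hqlt, rfl⟩ := hY
  have hrn := r.isLt
  have hqn := q.isLt
  simp only [add_mul, mul_add, elemMat_mul, val_mk']
  rw [if_neg (show ¬ (n - 1 - (r:ℕ) = (q:ℕ)) by omega),
    if_neg (show ¬ (n - 1 - (q:ℕ) = (r:ℕ)) by omega)]
  rcases eq_or_ne (r:ℕ) (q:ℕ) with h | h
  · have heq : r = q := Fin.ext h
    subst heq
    rw [if_pos rfl, if_pos rfl]
    simp
  · rw [if_neg h, if_neg (show ¬ (n - 1 - (q:ℕ) = n - 1 - (r:ℕ)) by omega)]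
    simp

lemma comm_ss (n : ℕ) {X Y : Matrix (Fin n) (Fin n) ℝ} (hX : X ∈ sSet n) (hY : Y ∈ sSet n) :
    X * Y - Y * X = 0 := by
  obtain ⟨q, hq, hqlt, rfl⟩ := hX
  obtain ⟨p, hp, hplt, rfl⟩ := hY
  have hqn := q.isLt
  have hpn := p.isLt
  simp only [elemMat_mul, val_mk']
  rw [if_neg (show ¬ (n - 1 - (q:ℕ) = (p:ℕ)) by omega),
    if_neg (show ¬ (n - 1 - (p:ℕ) = (q:ℕ)) by omega)]
  simp

lemma comm_av (n : ℕ) {X Y : Matrix (Fin n) (Fin n) ℝ} (hX : X ∈ aSet n) (hY : Y ∈ vSet n) :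
    X * Y - Y * X ∈ Submodule.span ℝ (vSet n) := by
  obtain ⟨r, hr, hrlt, rfl⟩ := hX
  obtain ⟨i, j, hij, hj, rfl⟩ := hY
  have hrn := r.isLt
  have hin := i.isLt
  have hjn := j.isLt
  simp only [add_mul, mul_add, elemMat_mul, val_mk']
  refine sub_mem (add_mem (ite_elem_mem _ _ _ ?_) (ite_elem_mem _ _ _ ?_))
    (add_mem (ite_elem_mem _ _ _ ?_) (ite_elem_mem _ _ _ ?_)) <;>
    (intro hc; constructor <;> (try simp only [val_mk']) <;> omega)

lemma comm_sv (n : ℕ) {X Y : Matrix (Fin n) (Fin n) ℝ} (hX : X ∈ sSet n) (hY : Y ∈ vSet n) :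
    X * Y - Y * X ∈ Submodule.span ℝ (vSet n) := by
  obtain ⟨q, hq, hqlt, rfl⟩ := hX
  obtain ⟨i, j, hij, hj, rfl⟩ := hY
  have hqn := q.isLt
  have hin := i.isLt
  have hjn := j.isLt
  simp only [elemMat_mul, val_mk']
  refine sub_mem (ite_elem_mem _ _ _ ?_) (ite_elem_mem _ _ _ ?_) <;>
    (intro hc; constructor <;> (try simp only [val_mk']) <;> omega)

lemma comm_vv (n : ℕ) {X Y : Matrix (Fin n) (Fin n) ℝ} (hX : X ∈ vSet n) (hY : Y ∈ vSet n) :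
    X * Y - Y * X ∈ Submodule.span ℝ (vSet n) := by
  obtain ⟨i, j, hij, hj, rfl⟩ := hX
  obtain ⟨k, l, hkl, hl, rfl⟩ := hY
  have hin := i.isLt
  have hkn := k.isLt
  simp only [elemMat_mul]
  refine sub_mem (ite_elem_mem _ _ _ ?_) (ite_elem_mem _ _ _ ?_) <;>
    (intro hc; constructor <;> omega)

lemma comm_swap {n : ℕ} {V : Submodule ℝ (Matrix (Fin n) (Fin n) ℝ)}
    {X Y : Matrix (Fin n) (Fin n) ℝ} (h : X * Y - Y * X ∈ V) : Y * X - X * Y ∈ V := by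
  simpa [neg_sub] using V.neg_mem h

lemma gen_comm (n : ℕ) :
    ∀ X ∈ aSet n ∪ sSet n ∪ vSet n, ∀ Y ∈ aSet n ∪ sSet n ∪ vSet n,
      X * Y - Y * X ∈ Submodule.span ℝ (vSet n) := by
  intro X hX Y hY
  rcases hX with (hX | hX) | hX <;> rcases hY with (hY | hY) | hY
  · rw [comm_aa n hX hY]; exact Submodule.zero_mem _
  · rw [comm_as n hX hY]; exact Submodule.zero_mem _
  · exact comm_av n hX hY
  · exact comm_swap (by rw [comm_as n hY hX]; exact Submodule.zero_mem _)
  · rw [comm_ss n hX hY]; exact Submodule.zero_mem _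
  · exact comm_sv n hX hY
  · exact comm_swap (comm_av n hY hX)
  · exact comm_swap (comm_sv n hY hX)
  · exact comm_vv n hX hY

lemma comm_span_mem (n : ℕ) (S : Set (Matrix (Fin n) (Fin n) ℝ))
    (V : Submodule ℝ (Matrix (Fin n) (Fin n) ℝ))
    (h : ∀ X ∈ S, ∀ Y ∈ S, X * Y - Y * X ∈ V) :
    ∀ X ∈ Submodule.span ℝ S, ∀ Y ∈ Submodule.span ℝ S, X * Y - Y * X ∈ V := by
  have key : ∀ X ∈ S, ∀ Y ∈ Submodule.span ℝ S, X * Y - Y * X ∈ V := by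
    intro X hX Y hY
    induction hY using Submodule.span_induction with
    | mem y hy => exact h X hX y hy
    | zero => simpa using V.zero_mem
    | add y z _ _ iy iz =>
        have : X * (y + z) - (y + z) * X = (X * y - y * X) + (X * z - z * X) := by
          noncomm_ring
        rw [this]; exact V.add_mem iy iz
    | smul c y _ iy =>
        have : X * (c • y) - (c • y) * X = c • (X * y - y * X) := by
          rw [Matrix.mul_smul, Matrix.smul_mul, smul_sub]
        rw [this]; exact V.smul_mem c iy
  intro X hX Y hY
  induction hX using Submodule.span_induction with
  | mem x hx => exact key x hx Y hY
  | zero => simpa using V.zero_mem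
  | add x z _ _ ix iz =>
      have : (x + z) * Y - Y * (x + z) = (x * Y - Y * x) + (z * Y - Y * z) := by
        noncomm_ring
      rw [this]; exact V.add_mem ix iz
  | smul c x _ ix =>
      have : (c • x) * Y - Y * (c • x) = c • (x * Y - Y * x) := by
        rw [Matrix.mul_smul, Matrix.smul_mul, smul_sub]
      rw [this]; exact V.smul_mem c ix

/-! ### Dimension computations -/

def aFam (n : ℕ) (r : Fin ((n + 1) / 2)) : Matrix (Fin n) (Fin n) ℝ :=
  elemMat n ⟨(r:ℕ), by have := r.isLt; omega⟩ ⟨(r:ℕ), by have := r.isLt; omega⟩ +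
    elemMat n ⟨n - 1 - (r:ℕ), by have := r.isLt; omega⟩ ⟨n - 1 - (r:ℕ), by have := r.isLt; omega⟩

def sFam (n : ℕ) (r : Fin (n / 2)) : Matrix (Fin n) (Fin n) ℝ :=
  elemMat n ⟨(r:ℕ), by have := r.isLt; omega⟩ ⟨n - 1 - (r:ℕ), by have := r.isLt; omega⟩

lemma aSet_eq_range (n : ℕ) : aSet n = Set.range (aFam n) := by
  ext X
  constructor
  · rintro ⟨r, hr, h, rfl⟩
    have hrn := r.isLt
    exact ⟨⟨(r:ℕ), by omega⟩, rfl⟩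
  · rintro ⟨r, rfl⟩
    have hrn := r.isLt
    exact ⟨⟨(r:ℕ), by omega⟩, by simp; omega, by omega, rfl⟩

lemma sSet_eq_range (n : ℕ) : sSet n = Set.range (sFam n) := by
  ext X
  constructor
  · rintro ⟨r, hr, h, rfl⟩
    have hrn := r.isLt
    exact ⟨⟨(r:ℕ), by omega⟩, rfl⟩
  · rintro ⟨r, rfl⟩
    have hrn := r.isLt
    exact ⟨⟨(r:ℕ), by omega⟩, by simp; omega, by omega, rfl⟩

lemma aFam_li (n : ℕ) : LinearIndependent ℝ (aFam n) := by
  rw [Fintype.linearIndependent_iff]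
  intro g hg r
  have hrn := r.isLt
  have h2 : (∑ q, g q • aFam n q) ⟨(r:ℕ), by omega⟩ ⟨(r:ℕ), by omega⟩ = 0 := by rw [hg]; rfl
  rw [Matrix.sum_apply] at h2
  simp only [Matrix.smul_apply, aFam, Matrix.add_apply, elemMat_apply, val_mk', and_self,
    smul_eq_mul] at h2
  rw [Finset.sum_eq_single r] at h2
  · rw [if_pos rfl] at h2
    split_ifs at h2 with h
    · nlinarith [h2]
    · nlinarith [h2]
  · intro b _ hbr
    have hb := b.isLt
    have hbr' : (b:ℕ) ≠ (r:ℕ) := fun h => hbr (Fin.ext h)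
    rw [if_neg hbr', if_neg (by omega)]
    ring
  · intro h; exact absurd (Finset.mem_univ r) h

lemma sFam_li (n : ℕ) : LinearIndependent ℝ (sFam n) := by
  rw [Fintype.linearIndependent_iff]
  intro g hg r
  have hrn := r.isLt
  have h2 : (∑ q, g q • sFam n q) ⟨(r:ℕ), by omega⟩ ⟨n - 1 - (r:ℕ), by omega⟩ = 0 := by
    rw [hg]; rfl
  rw [Matrix.sum_apply] at h2
  simp only [Matrix.smul_apply, sFam, elemMat_apply, val_mk', smul_eq_mul] at h2
  rw [Finset.sum_eq_single r] at h2
  · rw [if_pos ⟨rfl, rfl⟩] at h2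
    nlinarith [h2]
  · intro b _ hbr
    have hbr' : (b:ℕ) ≠ (r:ℕ) := fun h => hbr (Fin.ext h)
    rw [if_neg (by rintro ⟨h1, -⟩; exact hbr' h1)]
    ring
  · intro h; exact absurd (Finset.mem_univ r) h

lemma finrank_spanA (n : ℕ) :
    Module.finrank ℝ (Submodule.span ℝ (aSet n)) = (n + 1) / 2 := by
  rw [aSet_eq_range, finrank_span_eq_card (aFam_li n), Fintype.card_fin]

lemma finrank_spanS (n : ℕ) :
    Module.finrank ℝ (Submodule.span ℝ (sSet n)) = n / 2 := by
  rw [sSet_eq_range, finrank_span_eq_card (sFam_li n), Fintype.card_fin]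

lemma finrank_hAlg (n : ℕ) :
    Module.finrank ℝ (hAlg n) =
      (n + 1) / 2 + n / 2 + Module.finrank ℝ (Submodule.span ℝ (vSet n)) := by
  have e0 : hAlg n =
      (Submodule.span ℝ (aSet n) ⊔ Submodule.span ℝ (sSet n)) ⊔ Submodule.span ℝ (vSet n) := by
    show Submodule.span ℝ (aSet n ∪ sSet n ∪ vSet n) = _
    rw [Submodule.span_union, Submodule.span_union]
  have hAS : Submodule.span ℝ (aSet n) ⊓ Submodule.span ℝ (sSet n) = ⊥ := by
    have h1 : Submodule.span ℝ (aSet n) ⊓ Submodule.span ℝ (sSet n) ≤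
        patt n (fun i j => (i:ℕ) ≠ (j:ℕ)) ⊓ patt n (fun i j => (i:ℕ) = (j:ℕ)) :=
      inf_le_inf (spanA_le_ne n) (spanS_le_eq n)
    rw [patt_inf_eq_bot (fun i j => (em ((i:ℕ) = (j:ℕ))).symm)] at h1
    exact le_bot_iff.mp h1
  have hASV : (Submodule.span ℝ (aSet n) ⊔ Submodule.span ℝ (sSet n)) ⊓
      Submodule.span ℝ (vSet n) = ⊥ := by
    have h1 : (Submodule.span ℝ (aSet n) ⊔ Submodule.span ℝ (sSet n)) ⊓
        Submodule.span ℝ (vSet n) ≤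
        patt n (fun i j => ¬ diagAnti n i j) ⊓ patt n (fun i j => diagAnti n i j) :=
      inf_le_inf (sup_le (spanA_le_notDA n) (spanS_le_notDA n)) (spanV_le_DA n)
    rw [patt_inf_eq_bot (fun i j => (em (diagAnti n i j)).symm)] at h1
    exact le_bot_iff.mp h1
  have d1 := Submodule.finrank_sup_add_finrank_inf_eq
    (Submodule.span ℝ (aSet n)) (Submodule.span ℝ (sSet n))
  rw [hAS, finrank_bot, add_zero, finrank_spanA, finrank_spanS] at d1
  have d2 := Submodule.finrank_sup_add_finrank_inf_eq
    (Submodule.span ℝ (aSet n) ⊔ Submodule.span ℝ (sSet n)) (Submodule.span ℝ (vSet n))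
  rw [hASV, finrank_bot, add_zero, d1] at d2
  rw [e0, d2]

/-- `𝔥 = 𝔞_◇ ⊕ 𝔰 ⊕ 𝔳⁺` is a Lie subalgebra of the upper triangular
matrices `𝔟`, with `[𝔥,𝔥] ⊆ 𝔳⁺` and `dim 𝔥 = ⌈n/2⌉ + ⌊n/2⌋ + dim 𝔳⁺`. -/
theorem hAlg_subalgebra (n : ℕ) :
    (∀ X ∈ hAlg n, ∀ i j : Fin n, (j : ℕ) < (i : ℕ) → X i j = 0) ∧
    (∀ X ∈ hAlg n, ∀ Y ∈ hAlg n, X * Y - Y * X ∈ Submodule.span ℝ (vSet n)) ∧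
    Module.finrank ℝ (hAlg n) =
      (n + 1) / 2 + n / 2 + Module.finrank ℝ (Submodule.span ℝ (vSet n)) := by
  refine ⟨?_, ?_, finrank_hAlg n⟩
  · intro X hX i j hij
    have hX' : X ∈ Submodule.span ℝ (aSet n ∪ sSet n ∪ vSet n) := hX
    exact span_union_triangular n hX' i j hij
  · intro X hX Y hY
    have hX' : X ∈ Submodule.span ℝ (aSet n ∪ sSet n ∪ vSet n) := hX
    have hY' : Y ∈ Submodule.span ℝ (aSet n ∪ sSet n ∪ vSet n) := hY
    exact comm_span_mem n _ _ (gen_comm n) X hX' Y hY'
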